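/- Let A be a left Noetherian K-algebra and Q an ideal of A with the left Artin-Rees property. Let V be a finite dimensional left A-module with QV = 0 and let E be a finitely generated essential extension of V. Then Q^n E = 0 for some n ≥ 1. -/
import Mathlib


universe v

/-- A submodule is essential if it meets every nonzero submodule nontrivially. -/
def EssSub {A M : Type*} [Ring A] [AddCommGroup M] [Module A M]
    (N : Submodule A M) : Prop :=
  ∀ P : Submodule A M, P ⊓ N = ⊥ → P = ⊥

theorem stmt7 (K A : Type*) [Field K] [Ring A] [Algebra K A] [IsNoetherianRing A]
    (Q : Ideal A) (hQtwoSided : ∀ a ∈ Q, ∀ b : A, a * b ∈ Q)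
    (hAR : ∀ (M : Type v) [AddCommGroup M] [Module A M] [Module.Finite A M]
      (N : Submodule A M), ∃ n : ℕ, 1 ≤ n ∧ N ⊓ (Q ^ n • (⊤ : Submodule A M)) ≤ Q • N)
    (E : Type v) [AddCommGroup E] [Module A E] [Module K E] [IsScalarTower K A E]
    [Module.Finite A E]
    (V : Submodule A E) (hVfin : FiniteDimensional K (V.restrictScalars K))
    (hQV : Q • V = ⊥) (hVess : EssSub V) :
    ∃ n : ℕ, 1 ≤ n ∧ Q ^ n • (⊤ : Submodule A E) = ⊥ := by
  obtain ⟨n, hn, h⟩ := hAR E V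
  refine ⟨n, hn, hVess _ ?_⟩
  rw [← le_bot_iff, ← hQV, inf_comm]
  exact h
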